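/- Let Ω = S_θ ∪ B(R) ⊂ ℂ with θ ∈ (0, π), and for ζ > 0 define the norm ‖α‖_ζ = sup_{u∈Ω} |α(u)| (1 + ζ²|u|²) e^{-ζ|u|} on the space G of analytic functions on Ω with finite norm. Then for all α, β ∈ G, the convolution (α ⋆ β)(u) = ∫₀ᵘ α(s)β(u−s) ds satisfies ‖α ⋆ β‖_ζ ≤ (4π/ζ) ‖α‖_ζ ‖β‖_ζ. -/

import Mathlib

open Real intervalIntegral MeasureTheory


lemma aux_arctan (x : ℝ) (hx : 0 < x) (c : ℝ) :
    ∫ t in (0:ℝ)..c, 1/(1+x^2*t^2) = Real.arctan (x*c) / x := by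
  have h : ∀ t : ℝ, 1/(1+x^2*t^2) = (fun s : ℝ => 1/(1+s^2)) (x*t) := by
    intro t; simp only []; ring_nf
  simp_rw [h]
  rw [intervalIntegral.integral_comp_mul_left (fun s : ℝ => 1/(1+s^2)) hx.ne']
  rw [integral_one_div_one_add_sq]
  simp [smul_eq_mul, div_eq_inv_mul]

lemma aux_cont (x : ℝ) :
    Continuous (fun t : ℝ => 1/((1+x^2*t^2)*(1+x^2*(1-t)^2))) := by
  apply Continuous.div continuous_const (by continuity) (fun t => by positivity)

lemma aux_key (x : ℝ) (hx : 0 < x) :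
    ∫ t in (0:ℝ)..1, 1/((1+x^2*t^2)*(1+x^2*(1-t)^2)) ≤ 4*π/(x*(4+x^2)) := by
  set h : ℝ → ℝ := fun t => 1/((1+x^2*t^2)*(1+x^2*(1-t)^2)) with hh
  have hcont : Continuous h := aux_cont x
  have hint : ∀ a b : ℝ, IntervalIntegrable h volume a b :=
    fun a b => hcont.intervalIntegrable a b
  have hsplit : ∫ t in (0:ℝ)..1, h t
      = (∫ t in (0:ℝ)..(1/2), h t) + ∫ t in (1/2:ℝ)..1, h t :=
    (intervalIntegral.integral_add_adjacent_intervals (hint 0 (1/2)) (hint (1/2) 1)).symm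
  -- bound on first half
  have hb1 : ∫ t in (0:ℝ)..(1/2), h t
      ≤ (1+x^2/4)⁻¹ * (Real.arctan (x*(1/2)) / x) := by
    have hmono : ∫ t in (0:ℝ)..(1/2), h t
        ≤ ∫ t in (0:ℝ)..(1/2), (1+x^2/4)⁻¹ * (1/(1+x^2*t^2)) := by
      apply intervalIntegral.integral_mono_on (by norm_num) (hint 0 (1/2))
      · exact ((continuous_const.mul ((continuous_const.div (by continuity)
          (fun t => by positivity)))).intervalIntegrable 0 (1/2))
      · intro t ht
        obtain ⟨ht0, ht1⟩ := ht
        have hA : (0:ℝ) < 1+x^2*t^2 := by positivity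
        have h14 : (1:ℝ)/4 ≤ (1-t)^2 := by nlinarith
        have hB : (1:ℝ)+x^2/4 ≤ 1+x^2*(1-t)^2 := by
          nlinarith [mul_le_mul_of_nonneg_left h14 (sq_nonneg x)]
        have hB0 : (0:ℝ) < 1+x^2/4 := by positivity
        rw [hh]
        simp only []
        rw [mul_one_div, inv_eq_one_div, div_div]
        apply one_div_le_one_div_of_le (by positivity)
        calc (1+x^2/4) * (1+x^2*t^2) = (1+x^2*t^2) * (1+x^2/4) := by ring
        _ ≤ (1+x^2*t^2)*(1+x^2*(1-t)^2) := by nlinarith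
    rw [intervalIntegral.integral_const_mul, aux_arctan x hx] at hmono
    exact hmono
  have hb2 : ∫ t in (1/2:ℝ)..1, h t ≤ (1+x^2/4)⁻¹ * (Real.arctan (x*(1/2)) / x) := by
    have heq : ∫ t in (1/2:ℝ)..1, h t = ∫ t in (0:ℝ)..(1/2), h t := by
      have h1 : ∀ t : ℝ, h t = h (1 - t) := by
        intro t; rw [hh]; simp only []; ring_nf
      calc ∫ t in (1/2:ℝ)..1, h t = ∫ t in (1/2:ℝ)..1, h (1-t) := by
            apply intervalIntegral.integral_congr; intro t _; exact h1 t
        _ = ∫ t in (1-1:ℝ)..(1-1/2), h t := intervalIntegral.integral_comp_sub_left h 1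
        _ = ∫ t in (0:ℝ)..(1/2), h t := by norm_num
    rw [heq]; exact hb1
  have harct : Real.arctan (x*(1/2)) ≤ π/2 := (Real.arctan_lt_pi_div_two _).le
  have hhalf : (1+x^2/4)⁻¹ * (Real.arctan (x*(1/2)) / x) ≤ 2*π/(x*(4+x^2)) := by
    have : (1+x^2/4)⁻¹ * ((π/2) / x) = 2*π/(x*(4+x^2)) := by
      field_simp; ring
    calc (1+x^2/4)⁻¹ * (Real.arctan (x*(1/2)) / x)
        ≤ (1+x^2/4)⁻¹ * ((π/2) / x) := by gcongr
      _ = 2*π/(x*(4+x^2)) := this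
  calc ∫ t in (0:ℝ)..1, h t = (∫ t in (0:ℝ)..(1/2), h t) + ∫ t in (1/2:ℝ)..1, h t := hsplit
    _ ≤ 2*π/(x*(4+x^2)) + 2*π/(x*(4+x^2)) := add_le_add (hb1.trans hhalf) (hb2.trans hhalf)
    _ = 4*π/(x*(4+x^2)) := by ring

/-- On `Ω = S_θ ∪ B(R)` with `θ ∈ (0,π)`, if `α, β` are analytic on
`Ω` with `‖α‖_ζ ≤ Cα`, `‖β‖_ζ ≤ Cβ` for the weighted norm
`‖α‖_ζ = sup_{u∈Ω} |α(u)| (1 + ζ²|u|²) e^{-ζ|u|}`, then the convolution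
`(α ⋆ β)(u) = ∫₀ᵘ α(s) β(u-s) ds` (along the segment from `0` to `u`) satisfies
`‖α ⋆ β‖_ζ ≤ (4π/ζ) ‖α‖_ζ ‖β‖_ζ`. -/
theorem stmt_10 (θ R ζ : ℝ) (hθ : θ ∈ Set.Ioo 0 Real.pi) (hR : 0 < R) (hζ : 0 < ζ)
    (Ω : Set ℂ) (hΩ : Ω = {z : ℂ | |Complex.arg z| < θ/2} ∪ Metric.ball 0 R)
    (α β : ℂ → ℂ)
    (hα : DifferentiableOn ℂ α Ω) (hβ : DifferentiableOn ℂ β Ω)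
    (Cα Cβ : ℝ)
    (hCα : ∀ u ∈ Ω, ‖α u‖ * (1 + ζ ^ 2 * ‖u‖ ^ 2) * Real.exp (-(ζ * ‖u‖)) ≤ Cα)
    (hCβ : ∀ u ∈ Ω, ‖β u‖ * (1 + ζ ^ 2 * ‖u‖ ^ 2) * Real.exp (-(ζ * ‖u‖)) ≤ Cβ) :
    ∀ u ∈ Ω,
      ‖u * ∫ t in (0:ℝ)..1, α ((t : ℂ) * u) * β ((1 - (t : ℂ)) * u)‖
          * (1 + ζ ^ 2 * ‖u‖ ^ 2) * Real.exp (-(ζ * ‖u‖))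
        ≤ (4 * Real.pi / ζ) * Cα * Cβ := by
  have hπ := Real.pi_pos
  have h0mem : (0:ℂ) ∈ Ω := by
    rw [hΩ]; right; simpa using hR
  have hCα0 : 0 ≤ Cα := le_trans (by positivity) (hCα 0 h0mem)
  have hCβ0 : 0 ≤ Cβ := le_trans (by positivity) (hCβ 0 h0mem)
  have hRHS0 : 0 ≤ (4 * Real.pi / ζ) * Cα * Cβ :=
    mul_nonneg (mul_nonneg (by positivity) hCα0) hCβ0
  -- pointwise bounds
  have hbα : ∀ v ∈ Ω, ‖α v‖ ≤ Cα * Real.exp (ζ*‖v‖) / (1 + ζ^2*‖v‖^2) := by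
    intro v hv
    have h := hCα v hv
    have h1 : (0:ℝ) < 1 + ζ^2*‖v‖^2 := by positivity
    rw [le_div_iff₀ h1]
    have h2 := mul_le_mul_of_nonneg_right h (Real.exp_nonneg (ζ*‖v‖))
    calc ‖α v‖ * (1 + ζ^2*‖v‖^2)
        = ‖α v‖ * (1 + ζ^2*‖v‖^2) * Real.exp (-(ζ*‖v‖)) * Real.exp (ζ*‖v‖) := by
          rw [mul_assoc, ← Real.exp_add]; simp
      _ ≤ Cα * Real.exp (ζ*‖v‖) := h2
  have hbβ : ∀ v ∈ Ω, ‖β v‖ ≤ Cβ * Real.exp (ζ*‖v‖) / (1 + ζ^2*‖v‖^2) := by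
    intro v hv
    have h := hCβ v hv
    have h1 : (0:ℝ) < 1 + ζ^2*‖v‖^2 := by positivity
    rw [le_div_iff₀ h1]
    have h2 := mul_le_mul_of_nonneg_right h (Real.exp_nonneg (ζ*‖v‖))
    calc ‖β v‖ * (1 + ζ^2*‖v‖^2)
        = ‖β v‖ * (1 + ζ^2*‖v‖^2) * Real.exp (-(ζ*‖v‖)) * Real.exp (ζ*‖v‖) := by
          rw [mul_assoc, ← Real.exp_add]; simp
      _ ≤ Cβ * Real.exp (ζ*‖v‖) := h2
  intro u hu
  -- star-shapedness
  have hstar : ∀ t : ℝ, 0 ≤ t → t ≤ 1 → (t:ℂ) * u ∈ Ω := by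
    intro t ht0 ht1
    rcases eq_or_lt_of_le ht0 with h | h
    · rw [← h]; simpa using h0mem
    · rw [hΩ] at hu ⊢
      rcases hu with hs | hb
      · left
        show |Complex.arg ((t:ℂ)*u)| < θ/2
        rw [Complex.arg_real_mul u h]
        exact hs
      · right
        rw [Metric.mem_ball, dist_zero_right] at hb ⊢
        rw [norm_mul, Complex.norm_real, Real.norm_eq_abs, abs_of_pos h]
        calc t * ‖u‖ ≤ 1 * ‖u‖ := by
              apply mul_le_mul_of_nonneg_right ht1 (norm_nonneg u)
          _ = ‖u‖ := one_mul _
          _ < R := hb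
  rcases eq_or_ne u 0 with rfl | hu0
  · simpa using hRHS0
  have hr : 0 < ‖u‖ := norm_pos_iff.mpr hu0
  set r := ‖u‖ with hrdef
  set h : ℝ → ℝ := fun t => 1/((1+(ζ*r)^2*t^2)*(1+(ζ*r)^2*(1-t)^2)) with hh
  set K : ℝ := Cα * Cβ * Real.exp (ζ*r) with hK
  have hK0 : 0 ≤ K := by positivity
  -- integrand bound
  have hIb : ∀ t ∈ Set.Ioc (0:ℝ) 1,
      ‖α ((t:ℂ)*u) * β ((1 - (t:ℂ))*u)‖ ≤ K * h t := by
    intro t ⟨ht0, ht1⟩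
    have hmem1 := hstar t ht0.le ht1
    have hmem2 : (1 - (t:ℂ)) * u ∈ Ω := by
      have : (1 - (t:ℂ)) = ((1 - t : ℝ) : ℂ) := by push_cast; ring
      rw [this]
      exact hstar (1-t) (by linarith) (by linarith)
    have hn1 : ‖(t:ℂ)*u‖ = t * r := by
      rw [norm_mul, Complex.norm_real, Real.norm_eq_abs, abs_of_pos ht0]
    have hn2 : ‖(1 - (t:ℂ))*u‖ = (1-t) * r := by
      have : (1 - (t:ℂ)) = ((1 - t : ℝ) : ℂ) := by push_cast; ring
      rw [this, norm_mul, Complex.norm_real, Real.norm_eq_abs,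
        abs_of_nonneg (by linarith)]
    have hA := hbα _ hmem1
    have hB := hbβ _ hmem2
    rw [hn1] at hA; rw [hn2] at hB
    rw [norm_mul]
    calc ‖α ((t:ℂ)*u)‖ * ‖β ((1 - (t:ℂ))*u)‖
        ≤ (Cα * Real.exp (ζ*(t*r)) / (1 + ζ^2*(t*r)^2))
          * (Cβ * Real.exp (ζ*((1-t)*r)) / (1 + ζ^2*((1-t)*r)^2)) :=
          mul_le_mul hA hB (norm_nonneg _) (by positivity)
      _ = K * h t := by
          rw [hK, hh]
          simp only []
          have he : Real.exp (ζ*(t*r)) * Real.exp (ζ*((1-t)*r)) = Real.exp (ζ*r) := by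
            rw [← Real.exp_add]; ring_nf
          rw [div_mul_div_comm,
            show Cα * Real.exp (ζ*(t*r)) * (Cβ * Real.exp (ζ*((1-t)*r)))
              = Cα*Cβ*(Real.exp (ζ*(t*r)) * Real.exp (ζ*((1-t)*r))) from by ring,
            he,
            show (1 + ζ^2*(t*r)^2) * (1 + ζ^2*((1-t)*r)^2)
              = (1+(ζ*r)^2*t^2)*(1+(ζ*r)^2*(1-t)^2) from by ring,
            mul_one_div]
  have hhcont := aux_cont (ζ*r)
  have hgint : IntervalIntegrable (fun t => K * h t) volume 0 1 :=
    (continuous_const.mul hhcont).intervalIntegrable 0 1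
  have hInn : 0 ≤ ∫ t in (0:ℝ)..1, h t :=
    intervalIntegral.integral_nonneg (by norm_num) (fun t _ => by rw [hh]; positivity)
  have hE : ‖∫ t in (0:ℝ)..1, α ((t:ℂ)*u) * β ((1 - (t:ℂ))*u)‖
      ≤ K * ∫ t in (0:ℝ)..1, h t := by
    have := intervalIntegral.norm_integral_le_abs_of_norm_le
      (f := fun t : ℝ => α ((t:ℂ)*u) * β ((1 - (t:ℂ))*u)) (μ := volume)
      (g := fun t => K * h t)
      (by
        rw [MeasureTheory.ae_restrict_iff' measurableSet_uIoc]
        apply Filter.Eventually.of_forall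
        intro t ht
        rw [Set.uIoc_of_le (by norm_num : (0:ℝ) ≤ 1)] at ht
        exact hIb t ht) hgint
    rw [intervalIntegral.integral_const_mul] at this
    rwa [abs_of_nonneg (mul_nonneg hK0 hInn)] at this
  have hIkey := aux_key (ζ*r) (by positivity)
  -- final computation
  have hx2 : ζ^2 * r^2 = (ζ*r)^2 := by ring
  calc ‖u * ∫ t in (0:ℝ)..1, α ((t:ℂ)*u) * β ((1 - (t:ℂ))*u)‖
        * (1 + ζ^2*‖u‖^2) * Real.exp (-(ζ*‖u‖))
      = ‖∫ t in (0:ℝ)..1, α ((t:ℂ)*u) * β ((1 - (t:ℂ))*u)‖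
        * (r * (1 + (ζ*r)^2) * Real.exp (-(ζ*r))) := by
        rw [norm_mul, ← hrdef, hx2]; ring
    _ ≤ (K * ∫ t in (0:ℝ)..1, h t) * (r * (1 + (ζ*r)^2) * Real.exp (-(ζ*r))) := by
        apply mul_le_mul_of_nonneg_right hE (by positivity)
    _ ≤ (K * (4*π/((ζ*r)*(4+(ζ*r)^2)))) * (r * (1 + (ζ*r)^2) * Real.exp (-(ζ*r))) := by
        apply mul_le_mul_of_nonneg_right (mul_le_mul_of_nonneg_left hIkey hK0)
          (by positivity)
    _ = (4 * Real.pi / ζ) * Cα * Cβ * ((1+(ζ*r)^2)/(4+(ζ*r)^2)) := by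
        rw [hK, Real.exp_neg]
        field_simp
    _ ≤ (4 * Real.pi / ζ) * Cα * Cβ * 1 := by
        apply mul_le_mul_of_nonneg_left _ hRHS0
        rw [div_le_one (by positivity)]
        linarith
    _ = (4 * Real.pi / ζ) * Cα * Cβ := mul_one _
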